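/- Let K be an abstract simplicial complex on a linearly ordered vertex set, Y a simplicial set, and δ a nonsingular twisted structure on K with coefficients in Y. Then the graded collection {Y_n × S(K)_n} with the twisted faces d_i^δ and twisted degeneracies s_i^δ satisfies all simplicial identities: d_i^δ d_j^δ = d_j^δ d_{i+1}^δ for i ≥ j; s_j^δ s_i^δ = s_{i+1}^δ s_j^δ for i ≥ j; d_i^δ s_j^δ = s_{j−1}^δ d_i^δ for i < j; d_j^δ s_j^δ = id = d_{j+1}^δ s_j^δ; and d_i^δ s_j^δ = s_j^δ d_{i−1}^δ for i > j+1. In particular these data form a simplicial set Y ×_δ S(K). -/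

import Mathlib

open CategoryTheory Simplicial

universe u

/-- An abstract simplicial complex with vertices in a type `V`: a collection of nonempty
finite subsets of `V` closed under passage to nonempty subsets. -/
structure AbsSimplicialComplex (V : Type u) where
  faces : Set (Finset V)
  nonempty_of_mem : ∀ s ∈ faces, s.Nonempty
  down_closed : ∀ s ∈ faces, ∀ t ⊆ s, t.Nonempty → t ∈ faces

variable {V : Type u} [LinearOrder V]

/-- The `n`-simplices of the simplicial set `S(K)`: weakly increasing `(n+1)`-tuples of
vertices spanning a simplex of `K`. -/
def SSimplex (K : AbsSimplicialComplex V) (n : ℕ) : Type u :=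
  { v : Fin (n + 1) → V // Monotone v ∧ Finset.image v Finset.univ ∈ K.faces }

/-- The face `d_i` of `S(K)`, deleting the `i`-th vertex. -/
def SSimplex.face {K : AbsSimplicialComplex V} {n : ℕ} (i : Fin (n + 2))
    (v : SSimplex K (n + 1)) : SSimplex K n :=
  ⟨v.1 ∘ i.succAbove,
    v.2.1.comp (Fin.strictMono_succAbove i).monotone,
    K.down_closed _ v.2.2 _
      (by rw [← Finset.image_image]; exact Finset.image_subset_image (Finset.subset_univ _))
      (Finset.image_nonempty.mpr Finset.univ_nonempty)⟩

/-- The degeneracy `s_i` of `S(K)`, repeating the `i`-th vertex. -/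
def SSimplex.degen {K : AbsSimplicialComplex V} {n : ℕ} (i : Fin (n + 1))
    (v : SSimplex K n) : SSimplex K (n + 1) :=
  ⟨v.1 ∘ i.predAbove,
    v.2.1.comp (Fin.predAbove_right_monotone i),
    K.down_closed _ v.2.2 _
      (by rw [← Finset.image_image]; exact Finset.image_subset_image (Finset.subset_univ _))
      (Finset.image_nonempty.mpr Finset.univ_nonempty)⟩

/-- The twisted face map `d_i^δ(y, (v₀,…,v_{n+1})) = (δ_{v_i}(d_i y), (v₀,…,v̂_i,…))`. -/
def twistedFace {K : AbsSimplicialComplex V} (Y : SSet.{u})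
    (δ : V → (Y ≅ Y)) {n : ℕ} (i : Fin (n + 2)) :
    Y _⦋n + 1⦌ × SSimplex K (n + 1) → Y _⦋n⦌ × SSimplex K n :=
  fun p => ((δ (p.2.1 i)).hom.app (Opposite.op (SimplexCategory.mk n)) (Y.δ i p.1),
    p.2.face i)

/-- The twisted degeneracy map `s_i^δ(y, (v₀,…,v_n)) = (δ_{v_i}⁻¹(s_i y), (v₀,…,v_i,v_i,…))`. -/
def twistedDegeneracy {K : AbsSimplicialComplex V} (Y : SSet.{u})
    (δ : V → (Y ≅ Y)) {n : ℕ} (i : Fin (n + 1)) :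
    Y _⦋n⦌ × SSimplex K n → Y _⦋n + 1⦌ × SSimplex K (n + 1) :=
  fun p => ((δ (p.2.1 i)).inv.app (Opposite.op (SimplexCategory.mk (n + 1))) (Y.σ i p.1),
    p.2.degen i)

/- ### Auxiliary lemmas -/

lemma comm_app {Y : SSet.{u}} {f g : Y ⟶ Y} (h : f ≫ g = g ≫ f) (m : SimplexCategoryᵒᵖ)
    (y : Y.obj m) : g.app m (f.app m y) = f.app m (g.app m y) := by
  have := ConcreteCategory.congr_hom (NatTrans.congr_app h m) y
  simpa using this

lemma comm_inv_hom {C : Type*} [Category C] {X : C} {a b : X ≅ X}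
    (h : a.hom ≫ b.hom = b.hom ≫ a.hom) : a.inv ≫ b.hom = b.hom ≫ a.inv := by
  rw [Iso.inv_comp_eq, ← Category.assoc, h, Category.assoc, Iso.hom_inv_id, Category.comp_id]

lemma comm_inv_inv {C : Type*} [Category C] {X : C} {a b : X ≅ X}
    (h : a.hom ≫ b.hom = b.hom ≫ a.hom) : a.inv ≫ b.inv = b.inv ≫ a.inv := by
  rw [Iso.inv_comp_eq, ← Category.assoc, ← comm_inv_hom h.symm, Category.assoc, Iso.hom_inv_id,
    Category.comp_id]

lemma nat_δ {Y : SSet.{u}} (f : Y ⟶ Y) {n} (i : Fin (n+2)) (y : Y _⦋n+1⦌) :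
    f.app _ (Y.δ i y) = Y.δ i (f.app _ y) := ConcreteCategory.congr_hom (f.naturality _) y

lemma nat_σ {Y : SSet.{u}} (f : Y ⟶ Y) {n} (i : Fin (n+1)) (y : Y _⦋n⦌) :
    f.app _ (Y.σ i y) = Y.σ i (f.app _ y) := ConcreteCategory.congr_hom (f.naturality _) y

lemma pair_mem {K : AbsSimplicialComplex V} {m : ℕ} (v : SSimplex K m) (a b : Fin (m + 1)) :
    ({v.1 a, v.1 b} : Finset V) ∈ K.faces := by
  refine K.down_closed _ v.2.2 _ ?_ (Finset.insert_nonempty _ _)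
  intro x hx
  simp only [Finset.mem_insert, Finset.mem_singleton] at hx
  rcases hx with h | h <;> subst h <;> exact Finset.mem_image_of_mem _ (Finset.mem_univ _)

lemma toOrderHom_eq_apply {m k : SimplexCategory} {f g : m ⟶ k} (h : f = g)
    (x : Fin (m.len + 1)) : f.toOrderHom x = g.toOrderHom x := by rw [h]


/-- for a nonsingular twisted structure `δ` on an abstract simplicial complex `K`
(on a linearly ordered vertex set) with coefficients in a simplicial set `Y`, the graded
collection `{Y_n × S(K)_n}` with the twisted faces `d_i^δ` and twisted degeneracies `s_i^δ`
satisfies all the simplicial identities, and hence forms a simplicial set `Y ×_δ S(K)`. -/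
theorem twisted_simplicial_identities {K : AbsSimplicialComplex V} (Y : SSet.{u})
    (δ : V → (Y ≅ Y))
    (hcomm : ∀ v w : V, ({v, w} : Finset V) ∈ K.faces →
      (δ v).hom ≫ (δ w).hom = (δ w).hom ≫ (δ v).hom) :
    -- (1) `d_i^δ ∘ d_j^δ = d_j^δ ∘ d_{i+1}^δ` for `i ≥ j`
    (∀ (n : ℕ) (i j : Fin (n + 2)), j ≤ i →
      (twistedFace (K := K) Y δ i) ∘ (twistedFace Y δ j.castSucc) =
        (twistedFace Y δ j) ∘ (twistedFace Y δ i.succ)) ∧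
    -- (2) `s_j^δ ∘ s_i^δ = s_{i+1}^δ ∘ s_j^δ` for `i ≥ j`
    (∀ (n : ℕ) (i j : Fin (n + 1)), j ≤ i →
      (twistedDegeneracy (K := K) Y δ j.castSucc) ∘ (twistedDegeneracy Y δ i) =
        (twistedDegeneracy Y δ i.succ) ∘ (twistedDegeneracy Y δ j)) ∧
    -- (3) `d_i^δ ∘ s_j^δ = s_{j-1}^δ ∘ d_i^δ` for `i < j`
    (∀ (n : ℕ) (i : Fin (n + 2)) (j : Fin (n + 1)), i ≤ j.castSucc →
      (twistedFace (K := K) Y δ i.castSucc) ∘ (twistedDegeneracy Y δ j.succ) =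
        (twistedDegeneracy Y δ j) ∘ (twistedFace Y δ i)) ∧
    -- (4) `d_j^δ ∘ s_j^δ = id = d_{j+1}^δ ∘ s_j^δ`
    (∀ (n : ℕ) (j : Fin (n + 1)),
      (twistedFace (K := K) Y δ j.castSucc) ∘ (twistedDegeneracy Y δ j) = id ∧
      (twistedFace (K := K) Y δ j.succ) ∘ (twistedDegeneracy Y δ j) = id) ∧
    -- (5) `d_i^δ ∘ s_j^δ = s_j^δ ∘ d_{i-1}^δ` for `i > j + 1`
    (∀ (n : ℕ) (i : Fin (n + 2)) (j : Fin (n + 1)), j.castSucc < i →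
      (twistedFace (K := K) Y δ i.succ) ∘ (twistedDegeneracy Y δ j.castSucc) =
        (twistedDegeneracy Y δ j) ∘ (twistedFace Y δ i)) := by
  refine ⟨?g1, ?g2, ?g3, ?g4, ?g5⟩
  case g1 =>
    intro n i j H
    funext p
    obtain ⟨y, v⟩ := p
    refine Prod.ext_iff.mpr ⟨?_, ?_⟩
    · simp only [twistedFace, SSimplex.face, Function.comp_apply, Function.comp]
      rw [Fin.succAbove_of_le_castSucc _ _ (Fin.castSucc_le_castSucc_iff.mpr H),
        Fin.succAbove_of_castSucc_lt _ _ (Fin.castSucc_lt_succ_iff.mpr H),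
        ← nat_δ (δ (v.1 j.castSucc)).hom i, ← nat_δ (δ (v.1 i.succ)).hom j,
        comm_app (hcomm (v.1 j.castSucc) (v.1 i.succ) (pair_mem v _ _))]
      have hδ : Y.δ j (Y.δ i.succ y) = Y.δ i (Y.δ j.castSucc y) := ConcreteCategory.congr_hom (Y.δ_comp_δ H) y
      rw [hδ]
    · refine Subtype.ext (funext fun x => ?_)
      exact congrArg v.1 (toOrderHom_eq_apply (SimplexCategory.δ_comp_δ H).symm x)
  case g2 =>
    intro n i j H
    funext p
    obtain ⟨y, v⟩ := p
    refine Prod.ext_iff.mpr ⟨?_, ?_⟩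
    · simp only [twistedDegeneracy, SSimplex.degen, Function.comp_apply, Function.comp]
      rw [Fin.predAbove_of_le_castSucc _ _ (Fin.castSucc_le_castSucc_iff.mpr H),
        Fin.castPred_castSucc,
        Fin.predAbove_of_castSucc_lt _ _ (Fin.castSucc_lt_succ_iff.mpr H),
        Fin.pred_succ,
        ← nat_σ (δ (v.1 i)).inv j.castSucc, ← nat_σ (δ (v.1 j)).inv i.succ,
        comm_app (comm_inv_inv (hcomm (v.1 i) (v.1 j) (pair_mem v _ _)))]
      have hσ : Y.σ j.castSucc (Y.σ i y) = Y.σ i.succ (Y.σ j y) := ConcreteCategory.congr_hom (Y.σ_comp_σ H) y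
      rw [hσ]
    · refine Subtype.ext (funext fun x => ?_)
      exact congrArg v.1 (toOrderHom_eq_apply (SimplexCategory.σ_comp_σ H) x)
  case g3 =>
    intro n i j H
    funext p
    obtain ⟨y, v⟩ := p
    refine Prod.ext_iff.mpr ⟨?_, ?_⟩
    · simp only [twistedFace, twistedDegeneracy, SSimplex.face, SSimplex.degen,
        Function.comp_apply, Function.comp]
      rw [Fin.predAbove_of_le_castSucc _ _
          (Fin.castSucc_le_castSucc_iff.mpr (H.trans (Fin.castSucc_le_succ j))),
        Fin.castPred_castSucc,
        Fin.succAbove_of_le_castSucc _ _ H,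
        ← nat_δ (δ (v.1 j.succ)).inv i.castSucc, ← nat_σ (δ (v.1 i)).hom j,
        comm_app (comm_inv_hom (hcomm (v.1 j.succ) (v.1 i) (pair_mem v _ _)))]
      have hδσ : Y.δ i.castSucc (Y.σ j.succ y) = Y.σ j (Y.δ i y) :=
        ConcreteCategory.congr_hom (Y.δ_comp_σ_of_le H) y
      rw [hδσ]
    · refine Subtype.ext (funext fun x => ?_)
      exact congrArg v.1 (toOrderHom_eq_apply (SimplexCategory.δ_comp_σ_of_le H) x)
  case g4 =>
    intro n j
    constructor <;> (funext p; obtain ⟨y, v⟩ := p; refine Prod.ext_iff.mpr ⟨?_, ?_⟩)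
    · simp only [twistedFace, twistedDegeneracy, SSimplex.face, SSimplex.degen,
        Function.comp_apply, Function.comp, id_eq]
      rw [Fin.predAbove_of_le_castSucc _ _ le_rfl, Fin.castPred_castSucc,
        ← nat_δ (δ (v.1 j)).inv j.castSucc]
      have hδσ : Y.δ j.castSucc (Y.σ j y) = y := ConcreteCategory.congr_hom (Y.δ_comp_σ_self (i := j)) y
      rw [hδσ]
      have := ConcreteCategory.congr_hom (NatTrans.congr_app (δ (v.1 j)).inv_hom_id
        (Opposite.op (SimplexCategory.mk n))) y
      exact this
    · simp only [twistedFace, twistedDegeneracy, id_eq]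
      refine Subtype.ext (funext fun x => ?_)
      exact congrArg v.1 (toOrderHom_eq_apply SimplexCategory.δ_comp_σ_self x)
    · simp only [twistedFace, twistedDegeneracy, SSimplex.face, SSimplex.degen,
        Function.comp_apply, Function.comp, id_eq]
      rw [Fin.predAbove_of_castSucc_lt _ _ (Fin.castSucc_lt_succ (i := j)), Fin.pred_succ,
        ← nat_δ (δ (v.1 j)).inv j.succ]
      have hδσ : Y.δ j.succ (Y.σ j y) = y := ConcreteCategory.congr_hom (Y.δ_comp_σ_succ (i := j)) y
      rw [hδσ]
      have := ConcreteCategory.congr_hom (NatTrans.congr_app (δ (v.1 j)).inv_hom_id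
        (Opposite.op (SimplexCategory.mk n))) y
      exact this
    · simp only [twistedFace, twistedDegeneracy, id_eq]
      refine Subtype.ext (funext fun x => ?_)
      exact congrArg v.1 (toOrderHom_eq_apply SimplexCategory.δ_comp_σ_succ x)
  case g5 =>
    intro n i j H
    funext p
    obtain ⟨y, v⟩ := p
    refine Prod.ext_iff.mpr ⟨?_, ?_⟩
    · simp only [twistedFace, twistedDegeneracy, SSimplex.face, SSimplex.degen,
        Function.comp_apply, Function.comp]
      rw [Fin.predAbove_of_castSucc_lt _ _ (Fin.castSucc_lt_succ_iff.mpr H.le),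
        Fin.pred_succ,
        Fin.succAbove_of_castSucc_lt _ _ H,
        ← nat_δ (δ (v.1 j.castSucc)).inv i.succ, ← nat_σ (δ (v.1 i)).hom j,
        comm_app (comm_inv_hom (hcomm (v.1 j.castSucc) (v.1 i) (pair_mem v _ _)))]
      have hδσ : Y.δ i.succ (Y.σ j.castSucc y) = Y.σ j (Y.δ i y) :=
        ConcreteCategory.congr_hom (Y.δ_comp_σ_of_gt H) y
      rw [hδσ]
    · refine Subtype.ext (funext fun x => ?_)
      exact congrArg v.1 (toOrderHom_eq_apply (SimplexCategory.δ_comp_σ_of_gt H) x)
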